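/- Let T be a finite tree with vertex set C, let r ∈ C, and let ≻ be a linear order on C such that for all x, y ∈ C, if d(r, x) < d(r, y) then x ≻ y (where d is the graph distance in T). Then ≻ is single-peaked on T. -/

import Mathlib

section TreeAux

open SimpleGraph

variable {V : Type*} [DecidableEq V] {G : SimpleGraph V}

private lemma dist_lt_of_mem_support (hconn : G.Connected) {root a v : V}
    (P : G.Walk root a) (hv : v ∈ P.support) (hne : v ≠ a) :
    G.dist root v < P.length := by
  have h1 : G.dist root v ≤ (P.takeUntil v hv).length := SimpleGraph.dist_le _
  have h2 : G.dist v a ≤ (P.dropUntil v hv).length := SimpleGraph.dist_le _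
  have h3 : (P.takeUntil v hv).length + (P.dropUntil v hv).length = P.length := by
    have h := congrArg SimpleGraph.Walk.length (P.take_spec hv)
    rwa [SimpleGraph.Walk.length_append] at h
  have h4 : 0 < G.dist v a := hconn.pos_dist_of_ne hne
  omega

private lemma exists_shortest_path (hconn : G.Connected) (u v : V) :
    ∃ P : G.Walk u v, P.IsPath ∧ P.length = G.dist u v := by
  obtain ⟨w, hw⟩ := hconn.exists_walk_length_eq_dist u v
  exact ⟨w.bypass, w.bypass_isPath,
    le_antisymm (hw ▸ w.length_bypass_le) (SimpleGraph.dist_le _)⟩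

/-- Extend a shortest path to `a` by the edge `a-b`, assuming `b` is strictly
farther from the root; get a path to `b` of length `dist root a + 1`. -/
private lemma extend_shortest_path (hconn : G.Connected) {root a b : V}
    (hab : G.Adj a b) (hd : G.dist root a ≤ G.dist root b)
    {Pa : G.Walk root a} (hPa : Pa.IsPath) (hPal : Pa.length = G.dist root a) :
    ((SimpleGraph.Walk.cons hab.symm Pa.reverse).reverse : G.Walk root b).IsPath ∧
    ((SimpleGraph.Walk.cons hab.symm Pa.reverse).reverse : G.Walk root b).length
      = G.dist root a + 1 := by
  have hbs : b ∉ Pa.support := by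
    intro hb
    rcases eq_or_ne b a with rfl | hne
    · exact hab.ne rfl
    · have := dist_lt_of_mem_support hconn Pa hb hne
      omega
  constructor
  · apply SimpleGraph.Walk.IsPath.reverse
    rw [SimpleGraph.Walk.cons_isPath_iff]
    refine ⟨hPa.reverse, ?_⟩
    rw [SimpleGraph.Walk.support_reverse, List.mem_reverse]
    exact hbs
  · rw [SimpleGraph.Walk.length_reverse, SimpleGraph.Walk.length_cons,
      SimpleGraph.Walk.length_reverse, hPal]

/-- In a tree, the distances to the root of two adjacent vertices differ by
exactly one. -/
private lemma adj_dist_or (hT : G.IsTree) (root : V) {a b : V} (hab : G.Adj a b) :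
    G.dist root b = G.dist root a + 1 ∨ G.dist root a = G.dist root b + 1 := by
  obtain ⟨Pa, hPa, hPal⟩ := exists_shortest_path hT.isConnected root a
  obtain ⟨Pb, hPb, hPbl⟩ := exists_shortest_path hT.isConnected root b
  have h1 : G.dist root b ≤ G.dist root a + 1 := by
    have := SimpleGraph.dist_le (Pa.concat hab)
    rwa [SimpleGraph.Walk.length_concat, hPal] at this
  have h2 : G.dist root a ≤ G.dist root b + 1 := by
    have := SimpleGraph.dist_le (Pb.concat hab.symm)
    rwa [SimpleGraph.Walk.length_concat, hPbl] at this
  have hne : G.dist root a ≠ G.dist root b := by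
    intro he
    have hd : G.dist root a < G.dist root a + 1 := Nat.lt_succ_self _
    obtain ⟨hWp, hWl⟩ := extend_shortest_path hT.isConnected hab
      (by omega : G.dist root a ≤ G.dist root b) hPa hPal
    obtain ⟨q, _, huniq⟩ := hT.existsUnique_path root b
    have e1 := huniq _ hWp
    have e2 := huniq _ hPb
    have := congrArg SimpleGraph.Walk.length (e1.trans e2.symm)
    rw [hWl, hPbl] at this
    omega
  omega

/-- In a tree, the "parent" (neighbour closer to the root) is unique. -/
private lemma parent_unique (hT : G.IsTree) (root : V) {a a' b : V}
    (hab : G.Adj a b) (hab' : G.Adj a' b)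
    (hda : G.dist root a + 1 = G.dist root b)
    (hda' : G.dist root a' + 1 = G.dist root b) : a = a' := by
  obtain ⟨Pa, hPa, hPal⟩ := exists_shortest_path hT.isConnected root a
  obtain ⟨Pa', hPa', hPal'⟩ := exists_shortest_path hT.isConnected root a'
  obtain ⟨hWp, _⟩ := extend_shortest_path hT.isConnected hab
    (by omega : G.dist root a ≤ G.dist root b) hPa hPal
  obtain ⟨hWp', _⟩ := extend_shortest_path hT.isConnected hab'
    (by omega : G.dist root a' ≤ G.dist root b) hPa' hPal'
  obtain ⟨q, _, huniq⟩ := hT.existsUnique_path root b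
  have e : (SimpleGraph.Walk.cons hab.symm Pa.reverse).reverse
      = (SimpleGraph.Walk.cons hab'.symm Pa'.reverse).reverse :=
    (huniq _ hWp).trans (huniq _ hWp').symm
  have e2 : (SimpleGraph.Walk.cons hab.symm Pa.reverse)
      = (SimpleGraph.Walk.cons hab'.symm Pa'.reverse) := by
    have := congrArg SimpleGraph.Walk.reverse e
    rwa [SimpleGraph.Walk.reverse_reverse, SimpleGraph.Walk.reverse_reverse] at this
  have e3 := congrArg SimpleGraph.Walk.support e2
  rw [SimpleGraph.Walk.support_cons, SimpleGraph.Walk.support_cons,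
    SimpleGraph.Walk.support_eq_cons Pa.reverse,
    SimpleGraph.Walk.support_eq_cons Pa'.reverse] at e3
  simp only [List.cons.injEq] at e3
  exact e3.2.1

variable (hT : G.IsTree) (root : V) {f : ℕ → V} {n : ℕ}
  (hadj : ∀ i, i + 1 < n → G.Adj (f i) (f (i + 1)))
  (hinj : ∀ i j, i < n → j < n → f i = f j → i = j)

include hT hadj hinj

/-- Along a path in a tree, once the distance to the root increases, it keeps
increasing. -/
private lemma tree_up_propagate (i : ℕ) (hi : i + 1 < n)
    (hup : G.dist root (f i) + 1 = G.dist root (f (i + 1))) :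
    ∀ j, i ≤ j → j + 1 < n →
      G.dist root (f j) + 1 = G.dist root (f (j + 1)) := by
  intro j hij
  induction j, hij using Nat.le_induction with
  | base => exact fun _ => hup
  | succ j hij ih =>
    intro hj2
    have hj : j + 1 < n := by omega
    have hu := ih hj
    rcases adj_dist_or hT root (hadj (j + 1) hj2) with hup2 | hdown2
    · omega
    · exfalso
      have := parent_unique hT root (hadj j hj) ((hadj (j + 1) hj2).symm)
        hu (by omega)
      have := hinj j (j + 2) (by omega) (by omega) this
      omega

private lemma tree_up_increase (i : ℕ) (hi : i + 1 < n)
    (hup : G.dist root (f i) + 1 = G.dist root (f (i + 1))) :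
    ∀ j, i < j → j < n → G.dist root (f i) < G.dist root (f j) := by
  intro j hij
  induction j, hij using Nat.le_induction with
  | base => exact fun _ => by simp only [Nat.succ_eq_add_one]; omega
  | succ j hij ih =>
    intro hj2
    have h1 := ih (by omega)
    have h2 := tree_up_propagate hT root hadj hinj i hi hup j (by omega) (by omega)
    omega

/-- Along a path in a tree, before a decrease, all steps are decreases. -/
private lemma tree_down_propagate (i : ℕ) (hi : i + 1 < n)
    (hdown : G.dist root (f (i + 1)) + 1 = G.dist root (f i)) :
    ∀ j, j ≤ i → G.dist root (f (j + 1)) + 1 = G.dist root (f j) := by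
  intro j hji
  rcases adj_dist_or hT root (hadj j (by omega)) with hup | hdown'
  · exfalso
    have := tree_up_propagate hT root hadj hinj j (by omega) (by omega) i hji hi
    omega
  · exact hdown'.symm

private lemma tree_down_decrease (i : ℕ) (hi : i + 1 < n)
    (hdown : G.dist root (f (i + 1)) + 1 = G.dist root (f i)) :
    ∀ j, j ≤ i → G.dist root (f (i + 1)) < G.dist root (f j) := by
  suffices h : ∀ k j, j + k = i → G.dist root (f (i + 1)) < G.dist root (f j) by
    intro j hji; exact h (i - j) j (by omega)
  intro k
  induction k with
  | zero =>
    intro j hj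
    have hji : j = i := by omega
    subst hji
    omega
  | succ k ih =>
    intro j hj
    have hdj := tree_down_propagate hT root hadj hinj i hi hdown j (by omega)
    have := ih (j + 1) (by omega)
    omega

end TreeAux

/-- `x` appears strictly before `y` in the list `l`. -/
def listBefore {V : Type*} (l : List V) (x y : V) : Prop :=
  ∃ i j : Fin l.length, i < j ∧ l.get i = x ∧ l.get j = y

/-- The restriction of `r` to the finite set `X` is single peaked with respect to the
restriction of `r'` to `X`: letting `p` be the element of `X` ranked first (within `X`)
by `r`, whenever `p ≻' x ≻' y` or `y ≻' x ≻' p` (for `x, y ∈ X`) we have `x ≻ y`. -/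
def SinglePeakedOn {V : Type*} (X : Finset V) (r r' : V → V → Prop) : Prop :=
  ∀ p ∈ X, (∀ x ∈ X, x ≠ p → r p x) →
    ∀ x ∈ X, ∀ y ∈ X, ((r' p x ∧ r' x y) ∨ (r' y x ∧ r' x p)) → r x y

/-- A linear order `r` on the vertex set of `G` is single peaked on the tree `G` if for
every path of `G` the restriction of `r` to the vertices of the path is single peaked
with respect to the order induced by the path. -/
def SinglePeakedOnTree {V : Type*} [DecidableEq V] (G : SimpleGraph V)
    (r : V → V → Prop) : Prop :=
  ∀ l : List V, l.Nodup → l.Chain' G.Adj →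
    SinglePeakedOn l.toFinset r (listBefore l)

/-- Any linear order on the vertices of a finite tree which ranks vertices closer to a
fixed root `root` higher is single peaked on the tree. -/
theorem levelOrder_singlePeaked_on_tree
    {V : Type*} [Fintype V] [DecidableEq V] (G : SimpleGraph V) (hT : G.IsTree)
    (root : V) (succ : V → V → Prop) (hsto : IsStrictTotalOrder V succ)
    (hlevel : ∀ x y : V, G.dist root x < G.dist root y → succ x y) :
    SinglePeakedOnTree G succ := by
  intro l hnd hch p hpX hbest x hxX y hyX hcase
  classical
  -- succ is asymmetric
  have hasym : ∀ u w : V, succ u w → succ w u → False := fun u w h1 h2 =>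
    (hsto.toIsStrictOrder.toIrrefl.irrefl u)
      (hsto.toIsStrictOrder.toIsTrans.trans u w u h1 h2)
  set f : ℕ → V := fun k => l.getD k p with hf
  have hfget : ∀ (idx : Fin l.length), l.get idx = f idx.1 := by
    intro idx
    simp [hf, List.getD_eq_getElem l p idx.2]
  have hadj : ∀ i, i + 1 < l.length → G.Adj (f i) (f (i + 1)) := by
    intro i h
    have : G.Adj (l.get ⟨i, by omega⟩) (l.get ⟨i + 1, by omega⟩) :=
      List.isChain_iff_getElem.mp hch i (by omega)
    rwa [hfget ⟨i, by omega⟩, hfget ⟨i + 1, by omega⟩] at this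
  have hinj : ∀ i j, i < l.length → j < l.length → f i = f j → i = j := by
    intro i j hi hj hij
    have : l.get ⟨i, hi⟩ = l.get ⟨j, hj⟩ := by rw [hfget ⟨i, hi⟩, hfget ⟨j, hj⟩]; exact hij
    exact Fin.mk.injEq _ _ _ _ ▸ (hnd.get_inj_iff.mp this)
  have hmemf : ∀ i, i < l.length → f i ∈ l.toFinset := by
    intro i hi
    rw [List.mem_toFinset, ← hfget ⟨i, hi⟩]
    exact List.get_mem l ⟨i, hi⟩
  -- unpack the index data
  obtain ⟨⟨i1, j1, hij1, hg1, hg2⟩, ⟨i2, j2, hij2, hg3, hg4⟩⟩ | h2 := hcase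
  · -- p at i1 (=m), x at j1 = i2, y at j2
    have hj1i2 : (j1 : ℕ) = (i2 : ℕ) := by
      apply hinj j1 i2 j1.2 i2.2
      rw [← hfget j1, ← hfget i2, hg2, hg3]
    set m : ℕ := (i1 : ℕ)
    set a : ℕ := (j1 : ℕ)
    set b : ℕ := (j2 : ℕ)
    have hma : m < a := hij1
    have hab : a < b := hj1i2 ▸ hij2
    have hbn : b < l.length := j2.2
    have hpm : p = f m := by rw [← hg1, hfget i1]
    -- all steps at or after m go up
    have hallup : ∀ k, m ≤ k → k + 1 < l.length →
        G.dist root (f k) + 1 = G.dist root (f (k + 1)) := by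
      intro k hmk hk
      rcases adj_dist_or hT root (hadj k hk) with hu | hd
      · omega
      · exfalso
        have hdec := tree_down_decrease hT root hadj hinj k hk (by omega) m hmk
        have hs1 : succ (f (k + 1)) p := by rw [hpm]; exact hlevel _ _ hdec
        have hs2 : succ p (f (k + 1)) := by
          apply hbest _ (hmemf (k + 1) hk)
          intro he
          have := hinj (k + 1) m hk i1.2 (he.trans hpm)
          omega
        exact hasym _ _ hs1 hs2
    have hup : G.dist root (f a) + 1 = G.dist root (f (a + 1)) :=
      hallup a (le_of_lt hma) (by omega)
    have hd : G.dist root (f a) < G.dist root (f b) :=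
      tree_up_increase hT root hadj hinj a (by omega) hup b hab hbn
    have hxa : x = f a := by rw [← hg2, hfget j1]
    have hyb : y = f b := by rw [← hg4, hfget j2]
    rw [hxa, hyb]
    exact hlevel _ _ hd
  · -- y at i1, x at j1 = i2, p at j2 (=m)
    obtain ⟨⟨i1, j1, hij1, hg1, hg2⟩, ⟨i2, j2, hij2, hg3, hg4⟩⟩ := h2
    have hj1i2 : (j1 : ℕ) = (i2 : ℕ) := by
      apply hinj j1 i2 j1.2 i2.2
      rw [← hfget j1, ← hfget i2, hg2, hg3]
    set m : ℕ := (j2 : ℕ)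
    set b' : ℕ := (i1 : ℕ)
    have hmn : m < l.length := j2.2
    have hpm : p = f m := by rw [← hg4, hfget j2]
    -- all steps before m go down
    have halldown : ∀ k, k < m →
        G.dist root (f (k + 1)) + 1 = G.dist root (f k) := by
      intro k hkm
      rcases adj_dist_or hT root (hadj k (by omega)) with hu | hd
      · exfalso
        have hinc := tree_up_increase hT root hadj hinj k (by omega) (by omega)
          m hkm hmn
        have hs1 : succ (f k) p := by rw [hpm]; exact hlevel _ _ hinc
        have hs2 : succ p (f k) := by
          apply hbest _ (hmemf k (by omega))
          intro he
          have := hinj k m (by omega) hmn (he.trans hpm)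
          omega
        exact hasym _ _ hs1 hs2
      · exact hd.symm
    -- x at index a' = j1, y at index b' = i1, with b' < a' < m
    obtain ⟨c, hc⟩ : ∃ c, (j1 : ℕ) = c + 1 := ⟨(j1 : ℕ) - 1, by omega⟩
    have ham : (j1 : ℕ) < m := hj1i2 ▸ hij2
    have hdown : G.dist root (f (c + 1)) + 1 = G.dist root (f c) :=
      halldown c (by omega)
    have hdec := tree_down_decrease hT root hadj hinj c
      (by have := j1.2; omega) hdown b' (by omega)
    have hxa : x = f (c + 1) := by rw [← hg2, hfget j1, hc]
    have hyb : y = f b' := by rw [← hg1, hfget i1]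
    rw [hxa, hyb]
    exact hlevel _ _ hdec
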